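/- Let n, n_u, m be even positive integers, and let A ∈ ℝ^{n×n}, B_u ∈ ℝ^{n×n_u}, C ∈ ℝ^{n_u×n} be real matrices. Define S̃ = Θ_n B_u Θ_{n_u} B_uᵀ Θ_n − Θ_n A − Aᵀ Θ_n − Cᵀ Θ_{n_u} C and let r = rank(S̃). Suppose B_{v1} ∈ ℝ^{n×n_u} and B_{v2} ∈ ℝ^{n×m} satisfy B_{v1} = Θ_n Cᵀ Θ_{n_u} and A Θ_n + Θ_n Aᵀ + B_u Θ_{n_u} B_uᵀ + B_{v1} Θ_{n_u} B_{v1}ᵀ + B_{v2} Θ_m B_{v2}ᵀ = 0. Then m ≥ r. (Theorem 2, necessity: any physical realization requires at least rank(S̃) additional quantum noise channels.) -/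

import Mathlib

open Matrix

noncomputable section

/-- The canonical `k × k` block-diagonal skew-symmetric matrix
`Θ_k = diag(J, …, J)` with `J = [[0,1],[-1,0]]` (for `k` even). -/
def ThetaM (k : ℕ) : Matrix (Fin k) (Fin k) ℝ :=
  Matrix.of fun i j =>
    if j.val = i.val + 1 ∧ i.val % 2 = 0 then 1
    else if i.val = j.val + 1 ∧ j.val % 2 = 0 then -1
    else 0

lemma ThetaM_transpose (k : ℕ) : (ThetaM k)ᵀ = -(ThetaM k) := by
  ext i j
  simp only [ThetaM, transpose_apply, Matrix.neg_apply, of_apply]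
  split_ifs <;> first | (exfalso; simp only [true_and] at *; omega) | (exfalso; omega) | norm_num

lemma ThetaM_mul_self {k : ℕ} (hk : Even k) : ThetaM k * ThetaM k = -1 := by
  ext i j
  rw [Matrix.mul_apply]
  have hik : (i : ℕ) < k := i.isLt
  have hke : k % 2 = 0 := Nat.even_iff.mp hk
  rcases Nat.even_or_odd i.val with he | ho
  · have hmod : (i : ℕ) % 2 = 0 := Nat.even_iff.mp he
    have h1 : (i : ℕ) + 1 < k := by omega
    rw [Finset.sum_eq_single (⟨i.val + 1, h1⟩ : Fin k)]
    · simp only [ThetaM, of_apply, Matrix.neg_apply, Matrix.one_apply, Fin.ext_iff]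
      split_ifs <;> first | (exfalso; simp only [true_and] at *; omega) | (exfalso; omega) | norm_num
    · intro b _ hb
      have hbv : (b : ℕ) ≠ (i : ℕ) + 1 := fun h => hb (Fin.ext h)
      simp only [ThetaM, of_apply]
      split_ifs <;> first | (exfalso; simp only [true_and] at *; omega) | (exfalso; omega) | norm_num
    · intro h; exact absurd (Finset.mem_univ _) h
  · have hmod : (i : ℕ) % 2 = 1 := Nat.odd_iff.mp ho
    have h1 : (i : ℕ) - 1 < k := by omega
    rw [Finset.sum_eq_single (⟨i.val - 1, h1⟩ : Fin k)]
    · simp only [ThetaM, of_apply, Matrix.neg_apply, Matrix.one_apply, Fin.ext_iff]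
      split_ifs <;> first | (exfalso; simp only [true_and] at *; omega) | (exfalso; omega) | norm_num
    · intro b _ hb
      have hbv : (b : ℕ) ≠ (i : ℕ) - 1 := fun h => hb (Fin.ext h)
      simp only [ThetaM, of_apply]
      split_ifs <;> first | (exfalso; simp only [true_and] at *; omega) | (exfalso; omega) | norm_num
    · intro h; exact absurd (Finset.mem_univ _) h


/-- **Theorem 2 (necessity).** Any physical realization of the strictly proper system
`(A, Bu, C)` requires at least `rank S̃` additional quantum noise channels, where
`S̃ = Θ Bu Θ_{nu} Buᵀ Θ − Θ A − Aᵀ Θ − Cᵀ Θ_{nu} C`. -/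
theorem additional_noises_at_least_rank_S
    (n nu m : ℕ) (hn : 0 < n) (hne : Even n) (hnu : 0 < nu) (hnue : Even nu)
    (hm : 0 < m) (hme : Even m)
    (A : Matrix (Fin n) (Fin n) ℝ) (Bu : Matrix (Fin n) (Fin nu) ℝ)
    (C : Matrix (Fin nu) (Fin n) ℝ)
    (S : Matrix (Fin n) (Fin n) ℝ)
    (hS : S = ThetaM n * Bu * ThetaM nu * Buᵀ * ThetaM n
              - ThetaM n * A - Aᵀ * ThetaM n - Cᵀ * ThetaM nu * C)
    (Bv1 : Matrix (Fin n) (Fin nu) ℝ) (Bv2 : Matrix (Fin n) (Fin m) ℝ)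
    (hBv1 : Bv1 = ThetaM n * Cᵀ * ThetaM nu)
    (hPR : A * ThetaM n + ThetaM n * Aᵀ + Bu * ThetaM nu * Buᵀ +
        Bv1 * ThetaM nu * Bv1ᵀ + Bv2 * ThetaM m * Bv2ᵀ = 0) :
    m ≥ S.rank := by
  set Θ := ThetaM n
  set θ := ThetaM nu
  have hsq : Θ * Θ = -1 := ThetaM_mul_self hne
  have hsqu : θ * θ = -1 := ThetaM_mul_self hnue
  have htr : Θᵀ = -Θ := ThetaM_transpose n
  have htru : θᵀ = -θ := ThetaM_transpose nu
  have hBv1T : Bv1ᵀ = θ * C * Θ := by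
    rw [hBv1]; simp [Matrix.transpose_mul, htr, htru, Matrix.mul_assoc]
  have key : Θ * (A * Θ + Θ * Aᵀ + Bu * θ * Buᵀ +
      Bv1 * θ * Bv1ᵀ + Bv2 * ThetaM m * Bv2ᵀ) * Θ = 0 := by
    rw [hPR]; simp
  have expand : Θ * (A * Θ + Θ * Aᵀ + Bu * θ * Buᵀ +
      Bv1 * θ * Bv1ᵀ + Bv2 * ThetaM m * Bv2ᵀ) * Θ =
      -(Θ * A) - Aᵀ * Θ + Θ * Bu * θ * Buᵀ * Θ - Cᵀ * θ * C
        + Θ * Bv2 * ThetaM m * Bv2ᵀ * Θ := by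
    rw [hBv1T, hBv1]
    have e1 : Θ * (A * Θ) * Θ = -(Θ * A) := by
      rw [Matrix.mul_assoc, Matrix.mul_assoc, hsq]; simp
    have e2 : Θ * (Θ * Aᵀ) * Θ = -(Aᵀ * Θ) := by
      rw [← Matrix.mul_assoc, hsq]; simp
    have e4 : Θ * (Θ * Cᵀ * θ * θ * (θ * C * Θ)) * Θ = -(Cᵀ * θ * C) := by
      calc Θ * (Θ * Cᵀ * θ * θ * (θ * C * Θ)) * Θ
          = (Θ * Θ) * (Cᵀ * ((θ * θ) * (θ * (C * (Θ * Θ))))) := by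
            simp only [Matrix.mul_assoc]
        _ = -(Cᵀ * θ * C) := by rw [hsq, hsqu]; simp [Matrix.mul_assoc]
    calc Θ * (A * Θ + Θ * Aᵀ + Bu * θ * Buᵀ +
          Θ * Cᵀ * θ * θ * (θ * C * Θ) + Bv2 * ThetaM m * Bv2ᵀ) * Θ
        = Θ * (A * Θ) * Θ + Θ * (Θ * Aᵀ) * Θ + Θ * (Bu * θ * Buᵀ) * Θ +
          Θ * (Θ * Cᵀ * θ * θ * (θ * C * Θ)) * Θ +
          Θ * (Bv2 * ThetaM m * Bv2ᵀ) * Θ := by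
          simp only [Matrix.mul_add, Matrix.add_mul]
      _ = -(Θ * A) - Aᵀ * Θ + Θ * Bu * θ * Buᵀ * Θ - Cᵀ * θ * C
            + Θ * Bv2 * ThetaM m * Bv2ᵀ * Θ := by
          rw [e1, e2, e4]
          simp only [Matrix.mul_assoc]
          abel
  rw [expand] at key
  have hSeq : S = (-(Θ * Bv2)) * ThetaM m * Bv2ᵀ * Θ := by
    have hmain : Θ * Bu * θ * Buᵀ * Θ - Θ * A - Aᵀ * Θ - Cᵀ * θ * C =
        -(Θ * Bv2 * ThetaM m * Bv2ᵀ * Θ) := by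
      linear_combination (norm := abel) key
    rw [hS, hmain]
    simp [Matrix.neg_mul]
  calc S.rank ≤ (-(Θ * Bv2)).rank := by
        rw [hSeq]
        exact le_trans (Matrix.rank_mul_le_left _ _)
          (le_trans (Matrix.rank_mul_le_left _ _) (Matrix.rank_mul_le_left _ _))
    _ ≤ Fintype.card (Fin m) := Matrix.rank_le_card_width _
    _ = m := Fintype.card_fin m
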